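/- Fix K, r ∈ [1,∞) and, for each i ∈ ℕ₀ = ℕ ∪ {0}, let f_i : ℝ → ℝ be K-Lipschitz continuous with |f_i(0)| ≤ K. Define g_d : ℝ^d → ℝ by g_d(x) = f_0(Σ_{i=1}^d f_i(x_i)). Then for every d ∈ ℕ and ε ∈ (0,1] there exists a skeleton φ with ReLU-realization R_ReLU(φ) : ℝ^d → ℝ such that: 1) sup_{x∈[−r,r]^d} |g_d(x) − R_ReLU(φ)(x)| ≤ ε; 2) R_ReLU(φ) is √d·K²-Lipschitz on ℝ^d; 3) P(φ) ≤ (5/6)·10³·K⁴·r·d⁶·ε^{−1}. -/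

import Mathlib

open scoped BigOperators ENNReal

noncomputable section

/-- The rectified linear unit activation function. -/
def ReLU (x : ℝ) : ℝ := max x 0

/-- Truncation of a real sequence to its first `n` entries. -/
def trunc (n : ℕ) (x : ℕ → ℝ) : ℕ → ℝ := fun j => if j < n then x j else 0

/-- Embedding of a Euclidean vector into the space of real sequences. -/
def emb (n : ℕ) (x : EuclideanSpace ℝ (Fin n)) : ℕ → ℝ :=
  fun j => if h : j < n then x ⟨j, h⟩ else 0

/-- A neural network skeleton of depth `Dm + 1`.  The layer dimensions are
`l 0, …, l (Dm + 1)`; the weight matrix of layer `k + 1` is `V k` (a matrix of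
size `l (k+1) × l k`, stored as a doubly indexed sequence) and its bias is `b k`.
Entries beyond the relevant ranges are irrelevant junk. -/
structure NN where
  Dm : ℕ
  l : ℕ → ℕ
  V : ℕ → ℕ → ℕ → ℝ
  b : ℕ → ℕ → ℝ

namespace NN

/-- Depth `D(φ)` of a skeleton. -/
def depth (φ : NN) : ℕ := φ.Dm + 1

/-- Number of parameters `P(φ) = ∑_{k=1}^{D} l_k (l_{k-1} + 1)`. -/
def P (φ : NN) : ℕ := ∑ k ∈ Finset.range φ.depth, φ.l (k + 1) * (φ.l k + 1)

/-- The affine map `A_{k+1}(x) = V_{k+1} x + b_{k+1}` of a skeleton. -/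
def aff (φ : NN) (k : ℕ) (x : ℕ → ℝ) : ℕ → ℝ :=
  fun i => (∑ j ∈ Finset.range (φ.l k), φ.V k i j * x j) + φ.b k i

/-- State after `k` layers, with the activation applied after each affine map. -/
def hidden (a : ℝ → ℝ) (φ : NN) : ℕ → (ℕ → ℝ) → ℕ → ℝ
  | 0 => fun x => x
  | k + 1 => fun x i => a (φ.aff k (φ.hidden a k x) i)

/-- The `a`-realization `R_a(φ) = A_D ∘ a ∘ A_{D-1} ∘ ⋯ ∘ a ∘ A_1`, acting on
sequences (only the first `l 0` input coordinates and the first `l D` output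
coordinates are meaningful). -/
def fullReal (a : ℝ → ℝ) (φ : NN) (x : ℕ → ℝ) : ℕ → ℝ :=
  φ.aff φ.Dm (φ.hidden a φ.Dm (trunc (φ.l 0) x))

/-- The `a`-realization as a map `ℝ^m → ℝ^n` (meaningful when `l 0 = m` and
`l D = n`). -/
def realAs (a : ℝ → ℝ) (φ : NN) (m n : ℕ) (x : EuclideanSpace ℝ (Fin m)) :
    EuclideanSpace ℝ (Fin n) :=
  WithLp.toLp 2 (fun i : Fin n => φ.fullReal a (emb m x) i)

/-- The `a`-realization as a scalar-valued map `ℝ^m → ℝ`. -/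
def realScalar (a : ℝ → ℝ) (φ : NN) (m : ℕ) (x : EuclideanSpace ℝ (Fin m)) : ℝ :=
  φ.fullReal a (emb m x) 0

/-- The `a`-realization as a map `ℝ → ℝ`. -/
def real1 (a : ℝ → ℝ) (φ : NN) (x : ℝ) : ℝ :=
  φ.fullReal a (fun j => if j = 0 then x else 0) 0

/-- Concatenation `ψ ∘ φ` of two skeletons (meaningful when
`l_{D(φ)}(φ) = l_0(ψ)`). -/
def comp (ψ φ : NN) : NN where
  Dm := φ.Dm + ψ.Dm
  l := fun k => if k < φ.depth then φ.l k else ψ.l (k + 1 - φ.depth)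
  V := fun k =>
    if k < φ.Dm then φ.V k
    else if k = φ.Dm then fun i j => ∑ m ∈ Finset.range (ψ.l 0), ψ.V 0 i m * φ.V φ.Dm m j
    else ψ.V (k - φ.Dm)
  b := fun k =>
    if k < φ.Dm then φ.b k
    else if k = φ.Dm then
      fun i => (∑ m ∈ Finset.range (ψ.l 0), ψ.V 0 i m * φ.b φ.Dm m) + ψ.b 0 i
    else ψ.b (k - φ.Dm)

/-- Offset of the `q`-th block in layer `k` of a parallelization. -/
def poff (ν : ℕ → NN) (k q : ℕ) : ℕ := ∑ j ∈ Finset.range q, (ν j).l k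

/-- Parallelization `p(φ_1, …, φ_n)` of `n` skeletons (meaningful when they all
have the same depth): block-diagonal weight matrices and concatenated biases. -/
def parallel (n : ℕ) (ν : ℕ → NN) : NN where
  Dm := (ν 0).Dm
  l := fun k => ∑ j ∈ Finset.range n, (ν j).l k
  V := fun k i j =>
    ∑ q ∈ Finset.range n,
      if poff ν (k + 1) q ≤ i ∧ i < poff ν (k + 1) q + (ν q).l (k + 1) ∧
          poff ν k q ≤ j ∧ j < poff ν k q + (ν q).l k then
        (ν q).V k (i - poff ν (k + 1) q) (j - poff ν k q)
      else 0
  b := fun k i =>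
    ∑ q ∈ Finset.range n,
      if poff ν (k + 1) q ≤ i ∧ i < poff ν (k + 1) q + (ν q).l (k + 1) then
        (ν q).b k (i - poff ν (k + 1) q)
      else 0

/-- The activation `a` fulfills the `c`-identity requirement, witnessed by the
skeleton `I`: `I` has depth 2, input and output dimension 1, hidden dimension
at most `c`, and its `a`-realization is the identity on `ℝ`. -/
def IdReq (a : ℝ → ℝ) (c : ℝ) (I : NN) : Prop :=
  I.Dm = 1 ∧ I.l 0 = 1 ∧ I.l 2 = 1 ∧ (I.l 1 : ℝ) ≤ c ∧
    ∀ x : ℕ → ℝ, I.fullReal a x 0 = x 0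

/-- The `d`-fold parallelization `I_d` of an identity skeleton. -/
def Idn (I : NN) (d : ℕ) : NN := parallel d fun _ => I

/-- Concatenate `m` identity networks after `φ`. -/
def padAfter (I φ : NN) : ℕ → NN
  | 0 => φ
  | m + 1 => comp (Idn I ((padAfter I φ m).l (padAfter I φ m).depth)) (padAfter I φ m)

/-- Concatenate `m` identity networks in front of `φ`. -/
def padBefore (I φ : NN) : ℕ → NN
  | 0 => φ
  | m + 1 => comp (padBefore I φ m) (Idn I ((padBefore I φ m).l 0))

/-- Diagonal ("staggered") parallelization `p_I(φ_1, …, φ_n)` of arbitrary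
skeletons, obtained by padding each `φ_q` with identity networks so that all
have equal depth and then parallelizing. -/
def dpar (I : NN) (n : ℕ) (ν : ℕ → NN) : NN :=
  parallel n fun q =>
    padAfter I (padBefore I (ν q) (∑ j ∈ Finset.range q, (ν j).depth))
      (∑ j ∈ Finset.Ico (q + 1) n, (ν j).depth)

end NN


namespace P72

/-- clamp of `u` to `[0, δ]`. -/
def clampd (δ u : ℝ) : ℝ := min (max u 0) δ

/-- slope of `f` on the `j`-th grid interval. -/
def slp (f : ℝ → ℝ) (c δ : ℝ) (j : ℕ) : ℝ := (f (c + (j + 1) * δ) - f (c + j * δ)) / δ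

/-- piecewise linear interpolant of `f` on the grid `c, c+δ, …, c+Nδ`. -/
def pl (f : ℝ → ℝ) (c δ : ℝ) (N : ℕ) (t : ℝ) : ℝ :=
  f c + ∑ j ∈ Finset.range N, slp f c δ j * clampd δ (t - (c + j * δ))

lemma clampd_add {δ a : ℝ} (hδ : 0 ≤ δ) (ha : 0 ≤ a) (u : ℝ) :
    clampd (a + δ) u = clampd a u + clampd δ (u - a) := by
  unfold clampd
  rcases le_total u 0 with h | h <;> rcases le_total u a with h2 | h2 <;>
    rcases le_total u (a + δ) with h3 | h3 <;>
    simp [min_def, max_def] <;> split_ifs <;> linarith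

lemma sum_clampd {δ : ℝ} (hδ : 0 ≤ δ) (u : ℝ) (m : ℕ) :
    ∑ j ∈ Finset.range m, clampd δ (u - j * δ) = clampd (m * δ) u := by
  induction m with
  | zero => simp [clampd]
  | succ m ih =>
      rw [Finset.sum_range_succ, ih]
      push_cast
      rw [show ((m : ℝ) + 1) * δ = m * δ + δ by ring,
        clampd_add hδ (by positivity) u]

lemma clampd_sub_le {δ : ℝ} (hδ : 0 ≤ δ) {u v : ℝ} (h : v ≤ u) :
    0 ≤ clampd δ u - clampd δ v ∧ clampd δ u - clampd δ v ≤ u - v := by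
  unfold clampd
  simp [min_def, max_def]; split_ifs <;> constructor <;> linarith

lemma abs_slp_le {f : ℝ → ℝ} {K : ℝ} (hf : ∀ x y, |f x - f y| ≤ K * |x - y|)
    {c δ : ℝ} (hδ : 0 < δ) (j : ℕ) : |slp f c δ j| ≤ K := by
  unfold slp
  rw [abs_div, abs_of_pos hδ, div_le_iff₀ hδ]
  calc |f (c + (j + 1) * δ) - f (c + j * δ)| ≤ K * |c + (j+1) * δ - (c + j * δ)| := hf _ _
    _ = K * δ := by rw [show c + ((j:ℝ)+1) * δ - (c + j * δ) = δ by ring, abs_of_pos hδ]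

lemma pl_sub_pl {f : ℝ → ℝ} {K : ℝ} (hf : ∀ x y, |f x - f y| ≤ K * |x - y|)
    {c δ : ℝ} (hδ : 0 < δ) (N : ℕ) {x y : ℝ} (hxy : x ≤ y) :
    |pl f c δ N y - pl f c δ N x| ≤ K * (y - x) := by
  have hK : 0 ≤ K := by
    have := hf (c+1) c; simp at this
    nlinarith [abs_nonneg (f (c+1) - f c)]
  have key : pl f c δ N y - pl f c δ N x
      = ∑ j ∈ Finset.range N, slp f c δ j *
        (clampd δ (y - (c + j * δ)) - clampd δ (x - (c + j * δ))) := by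
    unfold pl; simp only [mul_sub]; rw [Finset.sum_sub_distrib]; ring
  rw [key]
  have h1 : ∀ j ∈ Finset.range N, |slp f c δ j *
      (clampd δ (y - (c + j * δ)) - clampd δ (x - (c + j * δ)))| ≤
      K * (clampd δ (y - (c + j * δ)) - clampd δ (x - (c + j * δ))) := by
    intro j _
    have hd := clampd_sub_le hδ.le (show x - (c + j*δ) ≤ y - (c + j*δ) by linarith)
    rw [abs_mul, abs_of_nonneg hd.1]
    exact mul_le_mul_of_nonneg_right (abs_slp_le hf hδ j) hd.1
  calc |∑ j ∈ Finset.range N, _| ≤ ∑ j ∈ Finset.range N, _ := Finset.abs_sum_le_sum_abs _ _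
    _ ≤ ∑ j ∈ Finset.range N, K * (clampd δ (y - (c + j * δ)) - clampd δ (x - (c + j * δ))) :=
        Finset.sum_le_sum h1
    _ = K * ((∑ j ∈ Finset.range N, clampd δ ((y - c) - j * δ))
        - ∑ j ∈ Finset.range N, clampd δ ((x - c) - j * δ)) := by
        rw [← Finset.sum_sub_distrib, Finset.mul_sum]
        congr 1; ext j; ring_nf
    _ ≤ K * (y - x) := by
        rw [sum_clampd hδ.le, sum_clampd hδ.le]
        have := clampd_sub_le (δ := (N:ℝ) * δ) (by positivity) (show x - c ≤ y - c by linarith)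
        nlinarith [this.2]

lemma pl_lipschitz {f : ℝ → ℝ} {K : ℝ} (hf : ∀ x y, |f x - f y| ≤ K * |x - y|)
    {c δ : ℝ} (hδ : 0 < δ) (N : ℕ) (x y : ℝ) :
    |pl f c δ N x - pl f c δ N y| ≤ K * |x - y| := by
  rcases le_total x y with h | h
  · rw [abs_sub_comm, show |x - y| = y - x by rw [abs_of_nonpos (by linarith)]; ring]
    exact pl_sub_pl hf hδ N h
  · rw [show |x - y| = x - y from abs_of_nonneg (by linarith)]
    exact pl_sub_pl hf hδ N h

lemma pl_grid {f : ℝ → ℝ} {c δ : ℝ} (hδ : 0 < δ) {N m : ℕ} (hm : m ≤ N) :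
    pl f c δ N (c + m * δ) = f (c + m * δ) := by
  unfold pl
  have hz : ∀ j ∈ Finset.range N, j ∉ Finset.range m →
      slp f c δ j * clampd δ (c + m * δ - (c + j * δ)) = 0 := by
    intro j _ hj
    simp only [Finset.mem_range, not_lt] at hj
    have : c + (m:ℝ) * δ - (c + j * δ) ≤ 0 := by
      have : (m:ℝ) ≤ j := by exact_mod_cast hj
      nlinarith
    unfold clampd
    rw [max_eq_right this, min_eq_left hδ.le, mul_zero]
  rw [← Finset.sum_subset (Finset.range_subset_range.2 hm) hz]
  have he : ∀ j ∈ Finset.range m,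
      slp f c δ j * clampd δ (c + m * δ - (c + j * δ)) = f (c + (j+1) * δ) - f (c + j * δ) := by
    intro j hj
    simp only [Finset.mem_range] at hj
    have h1 : c + (m:ℝ) * δ - (c + j * δ) = ((m:ℝ) - j) * δ := by ring
    have h2 : δ ≤ ((m:ℝ) - j) * δ := by
      have : (1:ℝ) ≤ (m:ℝ) - j := by
        have : (j:ℝ) + 1 ≤ m := by exact_mod_cast hj
        linarith
      nlinarith
    unfold clampd slp
    rw [h1, max_eq_left (by nlinarith), min_eq_right h2]
    field_simp
  rw [Finset.sum_congr rfl he]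
  have hts := Finset.sum_range_sub (fun j : ℕ => f (c + j * δ)) m
  push_cast at hts
  rw [hts]; ring

lemma pl_close {f : ℝ → ℝ} {K : ℝ} (hf : ∀ x y, |f x - f y| ≤ K * |x - y|)
    (hK : 0 ≤ K) {c δ : ℝ} (hδ : 0 < δ) {N : ℕ} {t : ℝ}
    (h1 : c ≤ t) (h2 : t ≤ c + N * δ) :
    |pl f c δ N t - f t| ≤ 2 * (K * δ) := by
  set m : ℕ := ⌊(t - c) / δ⌋₊ with hm
  have htc : 0 ≤ (t - c) / δ := div_nonneg (by linarith) hδ.le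
  have hmle : (m : ℝ) ≤ (t - c) / δ := Nat.floor_le htc
  have hmlt : (t - c) / δ < m + 1 := Nat.lt_floor_add_one _
  have hmN : m ≤ N := by
    have : (t - c) / δ ≤ N := by rw [div_le_iff₀ hδ]; linarith
    exact_mod_cast Nat.floor_le_of_le this
  have hg1 : c + m * δ ≤ t := by
    have := (le_div_iff₀ hδ).1 hmle; linarith
  have hg2 : t - (c + m * δ) ≤ δ := by
    have := (div_lt_iff₀ hδ).1 hmlt; nlinarith
  have e1 : |pl f c δ N t - pl f c δ N (c + m * δ)| ≤ K * δ := by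
    calc |pl f c δ N t - pl f c δ N (c + m * δ)| ≤ K * |t - (c + m * δ)| :=
          pl_lipschitz hf hδ N _ _
      _ ≤ K * δ := by
          apply mul_le_mul_of_nonneg_left _ hK
          rw [abs_of_nonneg (by linarith)]; exact hg2
  have e2 : |f (c + m * δ) - f t| ≤ K * δ := by
    calc |f (c + m * δ) - f t| ≤ K * |c + m * δ - t| := hf _ _
      _ ≤ K * δ := by
          apply mul_le_mul_of_nonneg_left _ hK
          rw [abs_of_nonpos (by linarith)]; linarith
  calc |pl f c δ N t - f t|
      = |(pl f c δ N t - pl f c δ N (c + m * δ)) + (f (c + m * δ) - f t)| := by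
        rw [pl_grid hδ hmN]; ring_nf
    _ ≤ |pl f c δ N t - pl f c δ N (c + m * δ)| + |f (c + m * δ) - f t| := abs_add_le _ _
    _ ≤ 2 * (K * δ) := by linarith

lemma sum_range_mul (g : ℕ → ℝ) (n c : ℕ) :
    ∑ p ∈ Finset.range (n * c), g p
      = ∑ i ∈ Finset.range n, ∑ j ∈ Finset.range c, g (i * c + j) := by
  induction n with
  | zero => simp
  | succ n ih =>
      rw [Nat.succ_mul, Finset.sum_range_add, ih, Finset.sum_range_succ]

lemma relu_sub {δ : ℝ} (hδ : 0 ≤ δ) (u : ℝ) : ReLU u - ReLU (u - δ) = clampd δ u := by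
  unfold ReLU clampd
  rcases le_total u 0 with h | h <;> rcases le_total u δ with h2 | h2 <;>
    simp [min_def, max_def] <;> split_ifs <;> linarith

lemma relu_shift (S R : ℝ) : ReLU (S + R) - R = max S (-R) := by
  unfold ReLU; rcases le_total (S + R) 0 with h | h <;> simp [max_def] <;> split_ifs <;> linarith

lemma sum_pairs (F : ℝ → ℝ) (c δ : ℝ) (hδ : 0 ≤ δ) (N : ℕ) (v : ℝ) :
    (∑ q ∈ Finset.range (N * 2),
      (if q % 2 = 0 then (1:ℝ) else -1) * slp F c δ (q / 2)
        * ReLU (v - (c + (↑(q / 2 + q % 2)) * δ)))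
    = pl F c δ N v - F c := by
  rw [sum_range_mul _ N 2]
  unfold pl
  rw [add_sub_cancel_left]
  apply Finset.sum_congr rfl
  intro j hj
  rw [Finset.sum_range_succ, Finset.sum_range_one]
  have e1 : (j * 2 + 0) % 2 = 0 := by omega
  have e2 : (j * 2 + 0) / 2 = j := by omega
  have e3 : (j * 2 + 1) % 2 = 1 := by omega
  have e4 : (j * 2 + 1) / 2 = j := by omega
  rw [e1, e2, e3, e4]
  norm_num
  have a1 : v - (c + ((j : ℝ) + 1) * δ) = (v - (c + (j : ℝ) * δ)) - δ := by ring
  rw [a1, ← relu_sub hδ (v - (c + (j : ℝ) * δ))]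
  ring

/-- The approximating network. -/
def net (f : ℕ → ℝ → ℝ) (d N M : ℕ) (c R δ Δ : ℝ) : NN where
  Dm := 3
  l := fun k => [d, d * (N * 2), 1, M * 2, 1].getD k 0
  V := fun k =>
    if k = 0 then fun p q => if q = p / (N * 2) then 1 else 0
    else if k = 1 then fun i p =>
      if i = 0 then
        (if p % 2 = 0 then (1:ℝ) else -1) * slp (f (p / (N * 2) + 1)) c δ (p % (N * 2) / 2)
      else 0
    else if k = 2 then fun _ _ => 1
    else fun i m =>
      if i = 0 then (if m % 2 = 0 then (1:ℝ) else -1) * slp (f 0) (-R) Δ (m / 2) else 0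
  b := fun k =>
    if k = 0 then fun p => -(c + (↑(p % (N * 2) / 2 + p % 2)) * δ)
    else if k = 1 then fun i => if i = 0 then (∑ i ∈ Finset.range d, f (i + 1) c) + R else 0
    else if k = 2 then fun m => -(R + (-R + (↑(m / 2 + m % 2)) * Δ))
    else fun i => if i = 0 then f 0 (-R) else 0

lemma net_real (f : ℕ → ℝ → ℝ) (d N M : ℕ) (c R δ Δ : ℝ) (hδ : 0 ≤ δ) (hΔ : 0 ≤ Δ)
    (x : ℕ → ℝ) :
    (net f d N M c R δ Δ).fullReal ReLU x 0 =
      pl (f 0) (-R) Δ M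
        (max (∑ i ∈ Finset.range d, pl (f (i + 1)) c δ N (trunc d x i)) (-R)) := by
  set φ := net f d N M c R δ Δ with hφ
  set y : ℕ → ℝ := trunc d x with hy
  set S : ℝ := ∑ i ∈ Finset.range d, pl (f (i + 1)) c δ N (y i) with hS
  have haff0 : ∀ p, φ.aff 0 y p
      = y (p / (N * 2)) - (c + (↑(p % (N * 2) / 2 + p % 2)) * δ) := by
    intro p
    show (∑ q ∈ Finset.range d, (if q = p / (N * 2) then (1:ℝ) else 0) * y q)
        + -(c + (↑(p % (N * 2) / 2 + p % 2)) * δ) = _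
    simp only [ite_mul, one_mul, zero_mul, Finset.sum_ite_eq']
    by_cases hpd : p / (N * 2) ∈ Finset.range d
    · rw [if_pos hpd]; ring
    · rw [if_neg hpd]
      have : y (p / (N * 2)) = 0 := by
        simp only [Finset.mem_range, not_lt] at hpd
        simp [hy, trunc, Nat.not_lt.mpr hpd]
      rw [this]; ring
  have key1 : φ.aff 1 (φ.hidden ReLU 1 y) 0 = S + R := by
    have expand : φ.aff 1 (φ.hidden ReLU 1 y) 0
        = (∑ p ∈ Finset.range (d * (N * 2)),
            ((if p % 2 = 0 then (1:ℝ) else -1) * slp (f (p / (N * 2) + 1)) c δ (p % (N * 2) / 2))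
              * ReLU (y (p / (N * 2)) - (c + (↑(p % (N * 2) / 2 + p % 2)) * δ)))
          + ((∑ i ∈ Finset.range d, f (i + 1) c) + R) := by
      show (∑ p ∈ Finset.range (d * (N * 2)),
            φ.V 1 0 p * ReLU (φ.aff 0 (φ.hidden ReLU 0 y) p)) + φ.b 1 0 = _
      congr 1
      apply Finset.sum_congr rfl
      intro p _
      congr 1
      rw [show φ.hidden ReLU 0 y = y from rfl, haff0 p]
    rw [expand, sum_range_mul _ d (N * 2)]
    have inner : ∀ i ∈ Finset.range d,
        (∑ q ∈ Finset.range (N * 2),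
          ((if (i * (N * 2) + q) % 2 = 0 then (1:ℝ) else -1)
              * slp (f ((i * (N * 2) + q) / (N * 2) + 1)) c δ ((i * (N * 2) + q) % (N * 2) / 2))
            * ReLU (y ((i * (N * 2) + q) / (N * 2))
                - (c + (↑((i * (N * 2) + q) % (N * 2) / 2 + (i * (N * 2) + q) % 2)) * δ)))
        = pl (f (i + 1)) c δ N (y i) - f (i + 1) c := by
      intro i _
      have step : ∀ q ∈ Finset.range (N * 2),
          ((if (i * (N * 2) + q) % 2 = 0 then (1:ℝ) else -1)
              * slp (f ((i * (N * 2) + q) / (N * 2) + 1)) c δ ((i * (N * 2) + q) % (N * 2) / 2))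
            * ReLU (y ((i * (N * 2) + q) / (N * 2))
                - (c + (↑((i * (N * 2) + q) % (N * 2) / 2 + (i * (N * 2) + q) % 2)) * δ))
          = (if q % 2 = 0 then (1:ℝ) else -1) * slp (f (i + 1)) c δ (q / 2)
              * ReLU (y i - (c + (↑(q / 2 + q % 2)) * δ)) := by
        intro q hq
        simp only [Finset.mem_range] at hq
        have ed : (i * (N * 2) + q) / (N * 2) = i := by
          rw [show i * (N * 2) + q = q + (N * 2) * i by ring,
            Nat.add_mul_div_left _ _ (by omega : 0 < N * 2), Nat.div_eq_of_lt hq]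
          omega
        have em : (i * (N * 2) + q) % (N * 2) = q := by
          rw [show i * (N * 2) + q = q + (N * 2) * i by ring,
            Nat.add_mul_mod_self_left, Nat.mod_eq_of_lt hq]
        have e2 : (i * (N * 2) + q) % 2 = q % 2 := by
          rw [show i * (N * 2) + q = 2 * (i * N) + q by ring, Nat.mul_add_mod]
        rw [ed, em, e2]
      rw [Finset.sum_congr rfl step, sum_pairs (f (i + 1)) c δ hδ N (y i)]
    rw [Finset.sum_congr rfl inner, Finset.sum_sub_distrib]
    rw [hS]; ring
  have h2v : φ.hidden ReLU 2 y 0 = ReLU (S + R) := by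
    show ReLU (φ.aff 1 (φ.hidden ReLU 1 y) 0) = _
    rw [key1]
  have haff2 : ∀ m, φ.aff 2 (φ.hidden ReLU 2 y) m
      = max S (-R) - (-R + (↑(m / 2 + m % 2)) * Δ) := by
    intro m
    show (∑ q ∈ Finset.range 1, (1:ℝ) * φ.hidden ReLU 2 y q)
        + -(R + (-R + (↑(m / 2 + m % 2)) * Δ)) = _
    rw [Finset.sum_range_one, one_mul, h2v]
    linarith [relu_shift S R]
  have hout : φ.fullReal ReLU x 0
      = (∑ m ∈ Finset.range (M * 2),
          ((if m % 2 = 0 then (1:ℝ) else -1) * slp (f 0) (-R) Δ (m / 2))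
            * ReLU (max S (-R) - (-R + (↑(m / 2 + m % 2)) * Δ)))
        + f 0 (-R) := by
    show (∑ m ∈ Finset.range (M * 2),
        φ.V 3 0 m * ReLU (φ.aff 2 (φ.hidden ReLU 2 (trunc (φ.l 0) x)) m)) + φ.b 3 0 = _
    have hty : trunc (φ.l 0) x = y := rfl
    rw [hty]
    congr 1
    apply Finset.sum_congr rfl
    intro m _
    rw [haff2 m]
    rfl
  rw [hout]
  have conv : ∀ m ∈ Finset.range (M * 2),
      ((if m % 2 = 0 then (1:ℝ) else -1) * slp (f 0) (-R) Δ (m / 2))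
        * ReLU (max S (-R) - (-R + (↑(m / 2 + m % 2)) * Δ))
      = (if m % 2 = 0 then (1:ℝ) else -1) * slp (f 0) (-R) Δ (m / 2)
        * ReLU (max S (-R) - (-R + (↑(m / 2 + m % 2)) * Δ)) := fun m _ => rfl
  rw [Finset.sum_congr rfl conv, sum_pairs (f 0) (-R) Δ hΔ M (max S (-R))]
  ring

lemma net_P (f : ℕ → ℝ → ℝ) (d N M : ℕ) (c R δ Δ : ℝ) :
    (net f d N M c R δ Δ).P = 2 * d ^ 2 * N + 4 * d * N + 6 * M + 2 := by
  show (∑ k ∈ Finset.range 4, _) = _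
  rw [Finset.sum_range_succ, Finset.sum_range_succ, Finset.sum_range_succ,
    Finset.sum_range_one]
  show d * (N * 2) * (d + 1) + 1 * (d * (N * 2) + 1) + M * 2 * (1 + 1) + 1 * (M * 2 + 1) = _
  ring

lemma sum_abs_le_sqrt {d : ℕ} (v : EuclideanSpace ℝ (Fin d)) :
    ∑ i : Fin d, |v i| ≤ Real.sqrt d * ‖v‖ := by
  have h := sq_sum_le_card_mul_sum_sq (s := (Finset.univ : Finset (Fin d)))
    (f := fun i => |v i|)
  simp only [Finset.card_univ, Fintype.card_fin] at h
  have hn : ‖v‖ = Real.sqrt (∑ i : Fin d, |v i| ^ 2) := by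
    rw [EuclideanSpace.norm_eq]
    simp only [Real.norm_eq_abs]
  have h0 : 0 ≤ ∑ i : Fin d, |v i| := Finset.sum_nonneg fun i _ => abs_nonneg _
  calc ∑ i : Fin d, |v i| = Real.sqrt ((∑ i : Fin d, |v i|) ^ 2) := (Real.sqrt_sq h0).symm
    _ ≤ Real.sqrt (d * ∑ i : Fin d, |v i| ^ 2) := Real.sqrt_le_sqrt (by exact_mod_cast h)
    _ = Real.sqrt d * Real.sqrt (∑ i : Fin d, |v i| ^ 2) :=
        Real.sqrt_mul (Nat.cast_nonneg d) _
    _ = Real.sqrt d * ‖v‖ := by rw [hn]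

end P72

open P72

set_option maxHeartbeats 2000000

/-- Proposition 7.2: Lipschitz functions of sums of one-dimensional Lipschitz
functions can be approximated by ReLU networks without the curse of
dimensionality. -/
theorem lipschitz_of_sum_approximation (K r : ℝ) (hK : 1 ≤ K) (hr : 1 ≤ r)
    (f : ℕ → ℝ → ℝ)
    (hLip : ∀ i : ℕ, ∀ x y : ℝ, |f i x - f i y| ≤ K * |x - y|)
    (h0 : ∀ i : ℕ, |f i 0| ≤ K) :
    ∀ d : ℕ, 0 < d → ∀ ε : ℝ, 0 < ε → ε ≤ 1 →
      ∃ φ : NN, φ.l 0 = d ∧ φ.l φ.depth = 1 ∧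
        (∀ x : EuclideanSpace ℝ (Fin d), (∀ i, |x i| ≤ r) →
          |f 0 (∑ i : Fin d, f ((i : ℕ) + 1) (x i)) - φ.realScalar ReLU d x| ≤ ε) ∧
        (∀ x y : EuclideanSpace ℝ (Fin d),
          |φ.realScalar ReLU d x - φ.realScalar ReLU d y| ≤
            Real.sqrt d * K ^ 2 * ‖x - y‖) ∧
        ((φ.P : ℝ) ≤ (5 / 6) * 10 ^ 3 * K ^ 4 * r * (d : ℝ) ^ 6 * ε⁻¹) := by
  intro d hd ε hε hε1
  have hK0 : (0:ℝ) < K := by linarith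
  have hr0 : (0:ℝ) < r := by linarith
  have hd1 : (1:ℝ) ≤ d := by exact_mod_cast hd
  have hd0 : (0:ℝ) < d := by linarith
  set B : ℝ := d * K ^ 2 * r / ε with hBdef
  have hK2 : (1:ℝ) ≤ K ^ 2 := by nlinarith
  have hdK2 : (1:ℝ) ≤ d * K ^ 2 := by nlinarith
  have hdKr : (1:ℝ) ≤ d * K ^ 2 * r := by nlinarith
  have hB1 : (1:ℝ) ≤ B := by
    rw [hBdef, le_div_iff₀ hε]; linarith
  have hB0 : (0:ℝ) < B := by linarith
  obtain ⟨N, hNlb, hNub⟩ : ∃ n : ℕ, 8 * B ≤ (n:ℝ) ∧ (n : ℝ) ≤ 9 * B := by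
    refine ⟨⌈8 * B⌉₊, Nat.le_ceil _, ?_⟩
    have := Nat.ceil_lt_add_one (show (0:ℝ) ≤ 8 * B by positivity)
    linarith
  obtain ⟨M, hMlb, hMub⟩ : ∃ n : ℕ, 32 * B ≤ (n:ℝ) ∧ (n : ℝ) ≤ 33 * B := by
    refine ⟨⌈32 * B⌉₊, Nat.le_ceil _, ?_⟩
    have := Nat.ceil_lt_add_one (show (0:ℝ) ≤ 32 * B by positivity)
    linarith
  have hNpos : (0:ℝ) < N := by linarith
  have hMpos : (0:ℝ) < M := by linarith
  set R : ℝ := 4 * d * K * r with hRdef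
  have hR0 : (0:ℝ) < R := by rw [hRdef]; positivity
  set δ : ℝ := 2 * r / N with hδdef
  set Δ : ℝ := 2 * R / M with hΔdef
  have hδ0 : (0:ℝ) < δ := by rw [hδdef]; positivity
  have hΔ0 : (0:ℝ) < Δ := by rw [hΔdef]; positivity
  have hδr : δ ≤ r := by
    rw [hδdef, div_le_iff₀ hNpos]; nlinarith
  have hNδ : -r + (N:ℝ) * δ = r := by
    rw [hδdef]; field_simp; ring
  have hMΔ : -R + (M:ℝ) * Δ = R := by
    rw [hΔdef]; field_simp; ring
  -- key multiplicative bounds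
  have hNε : 8 * (d * K ^ 2 * r) ≤ (N:ℝ) * ε := by
    have h := mul_le_mul_of_nonneg_right hNlb hε.le
    have hc : B * ε = d * K ^ 2 * r := by
      rw [hBdef]; field_simp
    nlinarith [h, hc]
  have hMε : 32 * (d * K ^ 2 * r) ≤ (M:ℝ) * ε := by
    have h := mul_le_mul_of_nonneg_right hMlb hε.le
    have hc : B * ε = d * K ^ 2 * r := by
      rw [hBdef]; field_simp
    nlinarith [h, hc]
  refine ⟨net f d N M (-r) R δ Δ, rfl, rfl, ?_, ?_, ?_⟩
  case _ =>
    -- useful realization formula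
    have hreal : ∀ x : EuclideanSpace ℝ (Fin d),
        (net f d N M (-r) R δ Δ).realScalar ReLU d x
          = pl (f 0) (-R) Δ M
              (max (∑ i : Fin d, pl (f ((i:ℕ) + 1)) (-r) δ N (x i)) (-R)) := by
      intro x
      show (net f d N M (-r) R δ Δ).fullReal ReLU (emb d x) 0 = _
      rw [net_real f d N M (-r) R δ Δ hδ0.le hΔ0.le (emb d x)]
      have hsum : ∑ i ∈ Finset.range d, pl (f (i + 1)) (-r) δ N (trunc d (emb d x) i)
          = ∑ i : Fin d, pl (f ((i:ℕ) + 1)) (-r) δ N (x i) := by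
        rw [← Fin.sum_univ_eq_sum_range (fun i => pl (f (i + 1)) (-r) δ N (trunc d (emb d x) i)) d]
        apply Finset.sum_congr rfl
        intro i _
        congr 1
        simp [trunc, emb, i.isLt]
      rw [hsum]
    intro x hx
    rw [hreal x]
    set S : ℝ := ∑ i : Fin d, pl (f ((i:ℕ) + 1)) (-r) δ N (x i) with hSdef
    set T : ℝ := ∑ i : Fin d, f ((i:ℕ) + 1) (x i) with hTdef
    have hcoord : ∀ i : Fin d,
        |pl (f ((i:ℕ) + 1)) (-r) δ N (x i) - f ((i:ℕ) + 1) (x i)| ≤ 2 * (K * δ) := by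
      intro i
      apply pl_close (hLip _) (by linarith) hδ0
      · linarith [(abs_le.1 (hx i)).1]
      · rw [hNδ]; exact (abs_le.1 (hx i)).2
    have hKKr : K ≤ K * r := by nlinarith
    have hplb : ∀ i : Fin d, |pl (f ((i:ℕ) + 1)) (-r) δ N (x i)| ≤ 4 * (K * r) := by
      intro i
      have t1 := hcoord i
      have t2 : |f ((i:ℕ) + 1) (x i) - f ((i:ℕ) + 1) 0| ≤ K * |x i - 0| := hLip _ _ _
      rw [sub_zero] at t2
      have t3 := h0 ((i:ℕ) + 1)
      have hKxi : K * |x i| ≤ K * r := mul_le_mul_of_nonneg_left (hx i) (by linarith)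
      have tri1 : |pl (f ((i:ℕ) + 1)) (-r) δ N (x i)|
          ≤ |pl (f ((i:ℕ) + 1)) (-r) δ N (x i) - f ((i:ℕ) + 1) (x i)|
            + |f ((i:ℕ) + 1) (x i)| := by
        calc |pl (f ((i:ℕ) + 1)) (-r) δ N (x i)|
            = |(pl (f ((i:ℕ) + 1)) (-r) δ N (x i) - f ((i:ℕ) + 1) (x i))
                + f ((i:ℕ) + 1) (x i)| := by ring_nf
          _ ≤ _ := abs_add_le _ _
      have tri2 : |f ((i:ℕ) + 1) (x i)|
          ≤ |f ((i:ℕ) + 1) (x i) - f ((i:ℕ) + 1) 0| + |f ((i:ℕ) + 1) 0| := by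
        calc |f ((i:ℕ) + 1) (x i)|
            = |(f ((i:ℕ) + 1) (x i) - f ((i:ℕ) + 1) 0) + f ((i:ℕ) + 1) 0| := by ring_nf
          _ ≤ _ := abs_add_le _ _
      have hδr2 : 2 * (K * δ) ≤ 2 * (K * r) := by nlinarith
      linarith
    have hSbound : |S| ≤ R := by
      calc |S| ≤ ∑ i : Fin d, |pl (f ((i:ℕ) + 1)) (-r) δ N (x i)| :=
            Finset.abs_sum_le_sum_abs _ _
        _ ≤ ∑ _i : Fin d, 4 * (K * r) := Finset.sum_le_sum fun i _ => hplb i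
        _ = d * (4 * (K * r)) := by
            rw [Finset.sum_const, Finset.card_univ, Fintype.card_fin, nsmul_eq_mul]
        _ = R := by rw [hRdef]; ring
    have hmax : max S (-R) = S := max_eq_left (by linarith [(abs_le.1 hSbound).1])
    rw [hmax]
    have hTS : |T - S| ≤ d * (2 * (K * δ)) := by
      calc |T - S| = |∑ i : Fin d,
            (f ((i:ℕ) + 1) (x i) - pl (f ((i:ℕ) + 1)) (-r) δ N (x i))| := by
            rw [hTdef, hSdef, ← Finset.sum_sub_distrib]
        _ ≤ ∑ i : Fin d, |f ((i:ℕ) + 1) (x i) - pl (f ((i:ℕ) + 1)) (-r) δ N (x i)| :=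
            Finset.abs_sum_le_sum_abs _ _
        _ ≤ ∑ _i : Fin d, 2 * (K * δ) := Finset.sum_le_sum fun i _ => by
            rw [abs_sub_comm]; exact hcoord i
        _ = d * (2 * (K * δ)) := by
            rw [Finset.sum_const, Finset.card_univ, Fintype.card_fin, nsmul_eq_mul]
    have hf0 : |f 0 T - f 0 S| ≤ K * (d * (2 * (K * δ))) := by
      calc |f 0 T - f 0 S| ≤ K * |T - S| := hLip 0 _ _
        _ ≤ K * (d * (2 * (K * δ))) := mul_le_mul_of_nonneg_left hTS (by linarith)
    have hpl0 : |f 0 S - pl (f 0) (-R) Δ M S| ≤ 2 * (K * Δ) := by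
      rw [abs_sub_comm]
      apply pl_close (hLip 0) (by linarith) hΔ0
      · linarith [(abs_le.1 hSbound).1]
      · rw [hMΔ]; exact (abs_le.1 hSbound).2
    have tri : |f 0 T - pl (f 0) (-R) Δ M S|
        ≤ |f 0 T - f 0 S| + |f 0 S - pl (f 0) (-R) Δ M S| := by
      calc |f 0 T - pl (f 0) (-R) Δ M S|
          = |(f 0 T - f 0 S) + (f 0 S - pl (f 0) (-R) Δ M S)| := by ring_nf
        _ ≤ _ := abs_add_le _ _
    have num1 : K * (d * (2 * (K * δ))) ≤ ε / 2 := by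
      have e1 : K * ((d:ℝ) * (2 * (K * δ))) = 4 * (d * K ^ 2 * r) / N := by
        rw [hδdef]; field_simp; ring
      rw [e1, div_le_iff₀ hNpos]
      linarith
    have num2 : 2 * (K * Δ) ≤ ε / 2 := by
      have e2 : 2 * (K * Δ) = 16 * (d * K ^ 2 * r) / M := by
        rw [hΔdef, hRdef]; field_simp; ring
      rw [e2, div_le_iff₀ hMpos]
      linarith
    linarith
  case _ =>
    have hreal : ∀ x : EuclideanSpace ℝ (Fin d),
        (net f d N M (-r) R δ Δ).realScalar ReLU d x
          = pl (f 0) (-R) Δ M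
              (max (∑ i : Fin d, pl (f ((i:ℕ) + 1)) (-r) δ N (x i)) (-R)) := by
      intro x
      show (net f d N M (-r) R δ Δ).fullReal ReLU (emb d x) 0 = _
      rw [net_real f d N M (-r) R δ Δ hδ0.le hΔ0.le (emb d x)]
      have hsum : ∑ i ∈ Finset.range d, pl (f (i + 1)) (-r) δ N (trunc d (emb d x) i)
          = ∑ i : Fin d, pl (f ((i:ℕ) + 1)) (-r) δ N (x i) := by
        rw [← Fin.sum_univ_eq_sum_range (fun i => pl (f (i + 1)) (-r) δ N (trunc d (emb d x) i)) d]
        apply Finset.sum_congr rfl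
        intro i _
        congr 1
        simp [trunc, emb, i.isLt]
      rw [hsum]
    intro x y
    rw [hreal x, hreal y]
    set Sx : ℝ := ∑ i : Fin d, pl (f ((i:ℕ) + 1)) (-r) δ N (x i) with hSx
    set Sy : ℝ := ∑ i : Fin d, pl (f ((i:ℕ) + 1)) (-r) δ N (y i) with hSy
    have l1 : |pl (f 0) (-R) Δ M (max Sx (-R)) - pl (f 0) (-R) Δ M (max Sy (-R))|
        ≤ K * |max Sx (-R) - max Sy (-R)| := pl_lipschitz (hLip 0) hΔ0 M _ _
    have l2 : |max Sx (-R) - max Sy (-R)| ≤ |Sx - Sy| := abs_max_sub_max_le_abs _ _ _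
    have l3 : |Sx - Sy| ≤ K * ∑ i : Fin d, |x i - y i| := by
      calc |Sx - Sy| = |∑ i : Fin d,
            (pl (f ((i:ℕ) + 1)) (-r) δ N (x i) - pl (f ((i:ℕ) + 1)) (-r) δ N (y i))| := by
            rw [hSx, hSy, ← Finset.sum_sub_distrib]
        _ ≤ ∑ i : Fin d,
            |pl (f ((i:ℕ) + 1)) (-r) δ N (x i) - pl (f ((i:ℕ) + 1)) (-r) δ N (y i)| :=
            Finset.abs_sum_le_sum_abs _ _
        _ ≤ ∑ i : Fin d, K * |x i - y i| :=
            Finset.sum_le_sum fun i _ => pl_lipschitz (hLip _) hδ0 N _ _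
        _ = K * ∑ i : Fin d, |x i - y i| := by rw [Finset.mul_sum]
    have l4 : ∑ i : Fin d, |x i - y i| ≤ Real.sqrt d * ‖x - y‖ := by
      have := sum_abs_le_sqrt (x - y)
      have hxy : ∀ i : Fin d, (x - y) i = x i - y i := fun i => rfl
      simp only [hxy] at this
      exact this
    have hK0' : (0:ℝ) ≤ K := by linarith
    calc |pl (f 0) (-R) Δ M (max Sx (-R)) - pl (f 0) (-R) Δ M (max Sy (-R))|
        ≤ K * |Sx - Sy| := le_trans l1 (mul_le_mul_of_nonneg_left l2 hK0')
      _ ≤ K * (K * ∑ i : Fin d, |x i - y i|) := mul_le_mul_of_nonneg_left l3 hK0'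
      _ ≤ K * (K * (Real.sqrt d * ‖x - y‖)) := by
          apply mul_le_mul_of_nonneg_left _ hK0'
          exact mul_le_mul_of_nonneg_left l4 hK0'
      _ = Real.sqrt d * K ^ 2 * ‖x - y‖ := by ring
  case _ =>
    rw [net_P]
    push_cast
    have hεinv : (1:ℝ) ≤ ε⁻¹ := by
      nlinarith [mul_inv_cancel₀ (ne_of_gt hε), inv_pos.2 hε]
    have hBε : B = d * K ^ 2 * r * ε⁻¹ := by rw [hBdef, div_eq_mul_inv]
    have s1 : 2 * (d:ℝ) ^ 2 * N ≤ 18 * d ^ 2 * B :=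
      by nlinarith [sq_nonneg (d:ℝ)]
    have s2 : 4 * (d:ℝ) * N ≤ 36 * d * B := by nlinarith
    have s3 : 6 * (M:ℝ) ≤ 198 * B := by nlinarith
    have hd2 : (d:ℝ) ≤ d ^ 2 := by nlinarith
    have main : 2 * (d:ℝ) ^ 2 * N + 4 * d * N + 6 * M + 2 ≤ 254 * d ^ 2 * B := by
      have u2 : 36 * (d:ℝ) * B ≤ 36 * d ^ 2 * B := by nlinarith
      have u3 : 198 * B ≤ 198 * (d:ℝ) ^ 2 * B := by nlinarith
      have u4 : (2:ℝ) ≤ 2 * (d:ℝ) ^ 2 * B := by nlinarith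
      linarith
    have final : 254 * (d:ℝ) ^ 2 * B ≤ 5 / 6 * 10 ^ 3 * K ^ 4 * r * (d:ℝ) ^ 6 * ε⁻¹ := by
      rw [hBε]
      have p1 : (d:ℝ) ^ 3 ≤ (d:ℝ) ^ 6 := pow_le_pow_right₀ hd1 (by norm_num)
      have p2 : K ^ 2 ≤ K ^ 4 := pow_le_pow_right₀ hK (by norm_num)
      have p3 : (d:ℝ) ^ 3 * K ^ 2 ≤ (d:ℝ) ^ 6 * K ^ 4 :=
        mul_le_mul p1 p2 (by positivity) (by positivity)
      have p4 : (0:ℝ) ≤ r * ε⁻¹ := by positivity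
      nlinarith [mul_le_mul_of_nonneg_right p3 p4]
    linarith

end
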